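/- The operator D₋^{(L)} := X₋ + (i/2)·y²·𝔏^{-1}[∂_z̄] = −2iy(y∂_τ̄ + vᵀ∂_z̄ − (1/4)y·𝔏^{-1}[∂_z̄]) is covariant from the weight-k to the weight-(k−2) slash action: for every invertible complex symmetric N×N matrix L, every k ∈ ℤ, every g ∈ G̃^J_N, and every smooth function f on ℍ_{1,N}, D₋^{(L)}(f|_{k,L}[g]) = (D₋^{(L)}f)|_{k-2,L}[g]. -/

import Mathlib

open Matrix Complex

noncomputable section

def J2 : Matrix (Fin 2) (Fin 2) ℝ := !![0, -1; 1, 0]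

/-- An element of the (centrally extended) Jacobi group data: a triple (M, X, κ). -/
structure JTriple (N : ℕ) where
  M : Matrix (Fin 2) (Fin 2) ℝ
  X : Matrix (Fin N) (Fin 2) ℝ
  κ : Matrix (Fin N) (Fin N) ℝ

/-- Membership in the centrally extended real Jacobi group `G̃^J_N`. -/
def JTriple.IsMem {N : ℕ} (g : JTriple N) : Prop :=
  g.M.det = 1 ∧ (g.κ + (2⁻¹ : ℝ) • (g.X * J2 * g.X.transpose)).IsSymm

/-- The group law of `G̃^J_N`. -/
def JTriple.mul {N : ℕ} (g g' : JTriple N) : JTriple N :=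
  ⟨g.M * g'.M, g.X * g'.M + g'.X, g.κ + g'.κ - g.X * g'.M * J2 * g'.X.transpose⟩

/-- The Möbius action `Mτ := (aτ+b)/(cτ+d)`. -/
def mAct (M : Matrix (Fin 2) (Fin 2) ℝ) (τ : ℂ) : ℂ :=
  ((M 0 0 : ℝ) * τ + (M 0 1 : ℝ)) / ((M 1 0 : ℝ) * τ + (M 1 1 : ℝ))

/-- The cocycle `β(M,τ) := (cτ+d)⁻¹`. -/
def betaC (M : Matrix (Fin 2) (Fin 2) ℝ) (τ : ℂ) : ℂ :=
  (((M 1 0 : ℝ) : ℂ) * τ + ((M 1 1 : ℝ) : ℂ))⁻¹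

/-- First column of `X`, as a complex vector. -/
def col1 {N : ℕ} (X : Matrix (Fin N) (Fin 2) ℝ) : Fin N → ℂ := fun i => (X i 0 : ℂ)

/-- Second column of `X`, as a complex vector. -/
def col2 {N : ℕ} (X : Matrix (Fin N) (Fin 2) ℝ) : Fin N → ℂ := fun i => (X i 1 : ℂ)

/-- The action of `G̃^J_N` on `ℍ_{1,N} ⊆ ℂ × ℂ^N`:
`(M,X,κ)·(τ,z) := (Mτ, β(M,τ)(z + X₁τ + X₂))`. -/
def jAct {N : ℕ} (g : JTriple N) (p : ℂ × (Fin N → ℂ)) : ℂ × (Fin N → ℂ) :=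
  (mAct g.M p.1, betaC g.M p.1 • (p.2 + p.1 • col1 g.X + col2 g.X))

/-- The matrix-valued function `a(g, (τ,z))`. -/
def aFun {N : ℕ} (g : JTriple N) (p : ℂ × (Fin N → ℂ)) : Matrix (Fin N) (Fin N) ℂ :=
  g.κ.map (fun t => (t : ℂ))
    + vecMulVec (col2 g.X) (col1 g.X) + vecMulVec (col1 g.X) p.2 + vecMulVec p.2 (col1 g.X)
    + p.1 • vecMulVec (col1 g.X) (col1 g.X)
    - (((g.M 1 0 : ℝ) : ℂ) * betaC g.M p.1) •
        vecMulVec (p.2 + p.1 • col1 g.X + col2 g.X) (p.2 + p.1 • col1 g.X + col2 g.X)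

/-- The scalar cocycle `α_L(g,(τ,z)) := e^{2πi·tr(L·a(g,(τ,z)))}`. -/
def alphaL {N : ℕ} (L : Matrix (Fin N) (Fin N) ℂ) (g : JTriple N)
    (p : ℂ × (Fin N → ℂ)) : ℂ :=
  Complex.exp (2 * Real.pi * Complex.I * (L * aFun g p).trace)

/-- The slash action `(f|_{k,L}[g])(τ,z) := β(M,τ)^k·α_L(g,(τ,z))·f(g·(τ,z))`. -/
def jSlash {N : ℕ} (k : ℤ) (L : Matrix (Fin N) (Fin N) ℂ)
    (f : ℂ × (Fin N → ℂ) → ℂ) (g : JTriple N) : ℂ × (Fin N → ℂ) → ℂ :=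
  fun p => betaC g.M p.1 ^ k * alphaL L g p * f (jAct g p)

/-- The Wirtinger derivative `∂_τ = ½(∂_x − i∂_y)` for functions on `ℂ × ℂ^N`. -/
def dTau {N : ℕ} (f : ℂ × (Fin N → ℂ) → ℂ) (p : ℂ × (Fin N → ℂ)) : ℂ :=
  (2⁻¹ : ℂ) * (fderiv ℝ f p (1, 0) - Complex.I * fderiv ℝ f p (Complex.I, 0))

/-- The Wirtinger derivative `∂_τ̄ = ½(∂_x + i∂_y)`. -/
def dTauBar {N : ℕ} (f : ℂ × (Fin N → ℂ) → ℂ) (p : ℂ × (Fin N → ℂ)) : ℂ :=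
  (2⁻¹ : ℂ) * (fderiv ℝ f p (1, 0) + Complex.I * fderiv ℝ f p (Complex.I, 0))

/-- The Wirtinger derivative `∂_{z_j} = ½(∂_{u_j} − i∂_{v_j})`. -/
def dZ {N : ℕ} (j : Fin N) (f : ℂ × (Fin N → ℂ) → ℂ) (p : ℂ × (Fin N → ℂ)) : ℂ :=
  (2⁻¹ : ℂ) * (fderiv ℝ f p (0, Pi.single j 1) -
    Complex.I * fderiv ℝ f p (0, Pi.single j Complex.I))

/-- The Wirtinger derivative `∂_{z̄_j} = ½(∂_{u_j} + i∂_{v_j})`. -/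
def dZBar {N : ℕ} (j : Fin N) (f : ℂ × (Fin N → ℂ) → ℂ) (p : ℂ × (Fin N → ℂ)) : ℂ :=
  (2⁻¹ : ℂ) * (fderiv ℝ f p (0, Pi.single j 1) +
    Complex.I * fderiv ℝ f p (0, Pi.single j Complex.I))

/-- `y = Im τ` as a complex number. -/
def yC {N : ℕ} (p : ℂ × (Fin N → ℂ)) : ℂ := (p.1.im : ℝ)

/-- `v_j = Im z_j` as a complex number. -/
def vC {N : ℕ} (p : ℂ × (Fin N → ℂ)) (j : Fin N) : ℂ := ((p.2 j).im : ℝ)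

/-- `𝔏 := 2πi·L`. -/
def Lfrak {N : ℕ} (L : Matrix (Fin N) (Fin N) ℂ) : Matrix (Fin N) (Fin N) ℂ :=
  (2 * (Real.pi : ℂ) * Complex.I) • L

/-- The lowering operator `X₋ := −2iy(y∂_τ̄ + vᵀ∂_z̄)`. -/
def opXm {N : ℕ} (f : ℂ × (Fin N → ℂ) → ℂ) (p : ℂ × (Fin N → ℂ)) : ℂ :=
  -2 * Complex.I * yC p * (yC p * dTauBar f p + ∑ j, vC p j * dZBar j f p)

/-- The raising operator `X₊^{k} := 2i(∂_τ + y⁻¹vᵀ∂_z + y⁻²𝔏[v]) + k·y⁻¹`. -/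
def opXp {N : ℕ} (L : Matrix (Fin N) (Fin N) ℂ) (k : ℤ)
    (f : ℂ × (Fin N → ℂ) → ℂ) (p : ℂ × (Fin N → ℂ)) : ℂ :=
  2 * Complex.I * (dTau f p + (yC p)⁻¹ * ∑ j, vC p j * dZ j f p
      + ((yC p)⁻¹) ^ 2 * (∑ i, ∑ j, vC p i * Lfrak L i j * vC p j) * f p)
    + (k : ℂ) * (yC p)⁻¹ * f p

/-- The lowering operator `Y₋,ⱼ := −iy∂_{z̄ⱼ}`. -/
def opYm {N : ℕ} (j : Fin N) (f : ℂ × (Fin N → ℂ) → ℂ) (p : ℂ × (Fin N → ℂ)) : ℂ :=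
  -Complex.I * yC p * dZBar j f p

/-- The raising operator `Y₊,ⱼ := i∂_{zⱼ} + 2iy⁻¹(𝔏v)ⱼ`. -/
def opYp {N : ℕ} (L : Matrix (Fin N) (Fin N) ℂ) (j : Fin N)
    (f : ℂ × (Fin N → ℂ) → ℂ) (p : ℂ × (Fin N → ℂ)) : ℂ :=
  Complex.I * dZ j f p + 2 * Complex.I * (yC p)⁻¹ * (∑ l, Lfrak L j l * vC p l) * f p
/-- The lowering operator `D₋^{(L)} := X₋ + (i/2)·y²·𝔏^{-1}[∂_z̄]
= −2iy(y∂_τ̄ + vᵀ∂_z̄ − ¼y·𝔏^{-1}[∂_z̄])`. -/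
def opDm {N : ℕ} (L : Matrix (Fin N) (Fin N) ℂ) (f : ℂ × (Fin N → ℂ) → ℂ)
    (p : ℂ × (Fin N → ℂ)) : ℂ :=
  opXm f p + Complex.I / 2 * (yC p) ^ 2 *
    ∑ i, ∑ j, (Lfrak L)⁻¹ i j * dZBar i (fun q => dZBar j f q) p


-- ===== auxiliary infrastructure =====
section Aux
variable {N : ℕ}

def Dbar {N : ℕ} (f : ℂ × (Fin N → ℂ) → ℂ) (p w : ℂ × (Fin N → ℂ)) : ℂ :=
  (2⁻¹ : ℂ) * (fderiv ℝ f p w + Complex.I * fderiv ℝ f p (Complex.I • w))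

lemma smul_decomp (c : ℂ) (w : ℂ × (Fin N → ℂ)) : c • w = c.re • w + c.im • (Complex.I • w) := by
  have hz : ∀ z : ℂ, c • z = c.re • z + c.im • (Complex.I • z) := by
    intro z
    simp only [smul_eq_mul, Complex.real_smul]
    linear_combination (-z) * Complex.re_add_im c
  ext
  · exact hz w.1
  · exact hz (w.2 _)

lemma Dbar_smul_arg (f : ℂ × (Fin N → ℂ) → ℂ) (p : ℂ × (Fin N → ℂ)) (c : ℂ)
    (w : ℂ × (Fin N → ℂ)) : Dbar f p (c • w) = (starRingEnd ℂ) c * Dbar f p w := by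
  have key : ∀ u : ℂ × (Fin N → ℂ), fderiv ℝ f p (c • u)
      = (c.re : ℂ) * fderiv ℝ f p u + (c.im : ℂ) * fderiv ℝ f p (Complex.I • u) := by
    intro u
    rw [smul_decomp c u, map_add, ContinuousLinearMap.map_smul, ContinuousLinearMap.map_smul]
    simp [Complex.real_smul]
  have h2 : Complex.I • (c • w) = c • (Complex.I • w) := smul_comm _ _ _
  have h3 : fderiv ℝ f p (Complex.I • (Complex.I • w)) = - fderiv ℝ f p w := by
    rw [smul_smul, Complex.I_mul_I, neg_smul, one_smul, map_neg]
  have hc : (starRingEnd ℂ) c = (c.re : ℂ) - (c.im : ℂ) * Complex.I := by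
    simp [Complex.ext_iff]
  rw [Dbar, Dbar, key w, h2, key (Complex.I • w), h3, hc]
  ring_nf
  rw [Complex.I_sq]
  ring

lemma Dbar_add_arg (f : ℂ × (Fin N → ℂ) → ℂ) (p w w' : ℂ × (Fin N → ℂ)) :
    Dbar f p (w + w') = Dbar f p w + Dbar f p w' := by
  simp only [Dbar, smul_add, map_add]; ring

lemma Dbar_zero_arg (f : ℂ × (Fin N → ℂ) → ℂ) (p : ℂ × (Fin N → ℂ)) :
    Dbar f p 0 = 0 := by simp [Dbar]

lemma Dbar_sum_arg (f : ℂ × (Fin N → ℂ) → ℂ) (p : ℂ × (Fin N → ℂ))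
    (s : Finset (Fin N)) (w : Fin N → ℂ × (Fin N → ℂ)) :
    Dbar f p (∑ j ∈ s, w j) = ∑ j ∈ s, Dbar f p (w j) := by
  induction s using Finset.induction with
  | empty => simp [Dbar_zero_arg]
  | insert _ _ h ih => rw [Finset.sum_insert h, Finset.sum_insert h, Dbar_add_arg, ih]

lemma Dbar_pair (f : ℂ × (Fin N → ℂ) → ℂ) (p : ℂ × (Fin N → ℂ)) (a : ℂ) (b : Fin N → ℂ) :
    Dbar f p (a, b) = (starRingEnd ℂ) a * Dbar f p (1, 0)
      + ∑ j, (starRingEnd ℂ) (b j) * Dbar f p (0, Pi.single j 1) := by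
  have hdec : ((a, b) : ℂ × (Fin N → ℂ)) = a • ((1:ℂ), (0 : Fin N → ℂ))
      + ∑ j, b j • ((0:ℂ), (Pi.single j 1 : Fin N → ℂ)) := by
    have h1 : ∀ j : Fin N, b j • ((0:ℂ), (Pi.single j 1 : Fin N → ℂ))
        = ((0:ℂ), (Pi.single j (b j) : Fin N → ℂ)) := by
      intro j
      rw [Prod.smul_mk, smul_zero, ← Pi.single_smul, smul_eq_mul, mul_one]
    simp only [h1, Prod.smul_mk, smul_eq_mul, mul_one, smul_zero]
    rw [Prod.ext_iff]
    constructor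
    · simp [Prod.fst_sum]
    · simp [Prod.snd_sum, Finset.univ_sum_single]
  rw [hdec, Dbar_add_arg, Dbar_smul_arg, Dbar_sum_arg]
  congr 1
  exact Finset.sum_congr rfl (fun j _ => Dbar_smul_arg f p (b j) _)

lemma Dbar_mul (G K : ℂ × (Fin N → ℂ) → ℂ) (p w : ℂ × (Fin N → ℂ))
    (hG : DifferentiableAt ℝ G p) (hK : DifferentiableAt ℝ K p) :
    Dbar (fun q => G q * K q) p w = Dbar G p w * K p + G p * Dbar K p w := by
  rw [Dbar, Dbar, Dbar, fderiv_fun_mul hG hK]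
  simp only [ContinuousLinearMap.add_apply, ContinuousLinearMap.smul_apply, smul_eq_mul]
  ring

lemma Dbar_holo (H : ℂ × (Fin N → ℂ) → ℂ) (p w : ℂ × (Fin N → ℂ))
    (hH : DifferentiableAt ℂ H p) : Dbar H p w = 0 := by
  have h : fderiv ℝ H p = (fderiv ℂ H p).restrictScalars ℝ :=
    (hH.hasFDerivAt.restrictScalars ℝ).fderiv
  rw [Dbar, h]
  simp only [ContinuousLinearMap.coe_restrictScalars']
  rw [ContinuousLinearMap.map_smul]
  simp only [smul_eq_mul]
  ring_nf
  rw [Complex.I_sq]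
  ring

lemma Dbar_comp' (f : ℂ × (Fin N → ℂ) → ℂ) (φ : ℂ × (Fin N → ℂ) → ℂ × (Fin N → ℂ))
    (p w : ℂ × (Fin N → ℂ)) (hφ : DifferentiableAt ℂ φ p)
    (hf : DifferentiableAt ℝ f (φ p)) :
    Dbar (fun q => f (φ q)) p w = Dbar f (φ p) (fderiv ℝ φ p w) := by
  have hφR : DifferentiableAt ℝ φ p := hφ.restrictScalars ℝ
  have hcomp : fderiv ℝ (f ∘ φ) p = (fderiv ℝ f (φ p)).comp (fderiv ℝ φ p) :=
    fderiv_comp p hf hφR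
  have hlin : fderiv ℝ φ p (Complex.I • w) = Complex.I • fderiv ℝ φ p w := by
    have h : fderiv ℝ φ p = (fderiv ℂ φ p).restrictScalars ℝ :=
      (hφ.hasFDerivAt.restrictScalars ℝ).fderiv
    rw [h]
    simp only [ContinuousLinearMap.coe_restrictScalars']
    rw [ContinuousLinearMap.map_smul]
  rw [Dbar, Dbar, show (fun q => f (φ q)) = f ∘ φ from rfl, hcomp]
  simp only [ContinuousLinearMap.comp_apply, hlin]

variable {N : ℕ}

lemma hasDerivAt_betaC (M : Matrix (Fin 2) (Fin 2) ℝ) (τ : ℂ)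
    (hτ : ((M 1 0 : ℝ) : ℂ) * τ + ((M 1 1 : ℝ) : ℂ) ≠ 0) :
    HasDerivAt (betaC M) (-((M 1 0 : ℝ) : ℂ) * betaC M τ ^ 2) τ := by
  have h1 : HasDerivAt (fun τ : ℂ => ((M 1 0 : ℝ) : ℂ) * τ + ((M 1 1 : ℝ) : ℂ))
      ((M 1 0 : ℝ) : ℂ) τ := by
    simpa using ((hasDerivAt_id τ).const_mul (((M 1 0 : ℝ)) : ℂ)).add_const ((M 1 1 : ℝ) : ℂ)
  have h2 := h1.inv hτ
  refine (h2 : HasDerivAt (betaC M) _ τ).congr_deriv (Eq.symm ?_)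
  rw [betaC, inv_pow, neg_mul, neg_div, neg_inj, div_eq_mul_inv]

lemma hasDerivAt_mAct (M : Matrix (Fin 2) (Fin 2) ℝ) (hdet : M.det = 1) (τ : ℂ)
    (hτ : ((M 1 0 : ℝ) : ℂ) * τ + ((M 1 1 : ℝ) : ℂ) ≠ 0) :
    HasDerivAt (mAct M) (betaC M τ ^ 2) τ := by
  have h1 : HasDerivAt (fun τ : ℂ => ((M 0 0 : ℝ) : ℂ) * τ + ((M 0 1 : ℝ) : ℂ))
      ((M 0 0 : ℝ) : ℂ) τ := by
    simpa using ((hasDerivAt_id τ).const_mul (((M 0 0 : ℝ)) : ℂ)).add_const ((M 0 1 : ℝ) : ℂ)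
  have h2 : HasDerivAt (fun τ : ℂ => ((M 1 0 : ℝ) : ℂ) * τ + ((M 1 1 : ℝ) : ℂ))
      ((M 1 0 : ℝ) : ℂ) τ := by
    simpa using ((hasDerivAt_id τ).const_mul (((M 1 0 : ℝ)) : ℂ)).add_const ((M 1 1 : ℝ) : ℂ)
  have h3 := h1.div h2 hτ
  refine (h3 : HasDerivAt (mAct M) _ τ).congr_deriv (Eq.symm ?_)
  have hd : ((M 0 0 : ℝ) : ℂ) * ((M 1 1 : ℝ) : ℂ) - ((M 0 1 : ℝ) : ℂ) * ((M 1 0 : ℝ) : ℂ)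
      = 1 := by
    rw [Matrix.det_fin_two] at hdet
    have h := congrArg (fun r : ℝ => (r : ℂ)) hdet
    push_cast at h
    linear_combination h
  have hnum : ((M 0 0 : ℝ) : ℂ) * (((M 1 0 : ℝ) : ℂ) * τ + ((M 1 1 : ℝ) : ℂ))
      - (((M 0 0 : ℝ) : ℂ) * τ + ((M 0 1 : ℝ) : ℂ)) * ((M 1 0 : ℝ) : ℂ) = 1 := by
    linear_combination hd
  rw [hnum, betaC, inv_pow, one_div]

section
variable (g : JTriple N) (q : ℂ × (Fin N → ℂ))

/-- derivative CLM for jAct -/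
def jActD (g : JTriple N) (q : ℂ × (Fin N → ℂ)) :
    (ℂ × (Fin N → ℂ)) →L[ℂ] (ℂ × (Fin N → ℂ)) :=
  ((betaC g.M q.1 ^ 2) • ContinuousLinearMap.fst ℂ ℂ (Fin N → ℂ)).prod
    (ContinuousLinearMap.pi fun i =>
      (betaC g.M q.1 • ((ContinuousLinearMap.proj i).comp
          (ContinuousLinearMap.snd ℂ ℂ (Fin N → ℂ))
        + (col1 g.X i) • ContinuousLinearMap.fst ℂ ℂ (Fin N → ℂ))
      + (q.2 i + q.1 * col1 g.X i + col2 g.X i) •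
          ((-((g.M 1 0 : ℝ) : ℂ) * betaC g.M q.1 ^ 2) •
            ContinuousLinearMap.fst ℂ ℂ (Fin N → ℂ))))

lemma hasFDerivAt_jAct (hdet : g.M.det = 1)
    (hq : ((g.M 1 0 : ℝ) : ℂ) * q.1 + ((g.M 1 1 : ℝ) : ℂ) ≠ 0) :
    HasFDerivAt (jAct g) (jActD g q) q := by
  have hfst : HasFDerivAt (fun p : ℂ × (Fin N → ℂ) => p.1)
      (ContinuousLinearMap.fst ℂ ℂ (Fin N → ℂ)) q := hasFDerivAt_fst
  have h1 : HasFDerivAt (fun p : ℂ × (Fin N → ℂ) => mAct g.M p.1)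
      ((betaC g.M q.1 ^ 2) • ContinuousLinearMap.fst ℂ ℂ (Fin N → ℂ)) q :=
    (hasDerivAt_mAct g.M hdet q.1 hq).comp_hasFDerivAt q hfst
  have hβ : HasFDerivAt (fun p : ℂ × (Fin N → ℂ) => betaC g.M p.1)
      ((-((g.M 1 0 : ℝ) : ℂ) * betaC g.M q.1 ^ 2) •
        ContinuousLinearMap.fst ℂ ℂ (Fin N → ℂ)) q :=
    (hasDerivAt_betaC g.M q.1 hq).comp_hasFDerivAt q hfst
  have h2 : ∀ i, HasFDerivAt
      (fun p : ℂ × (Fin N → ℂ) => betaC g.M p.1 * (p.2 i + p.1 * col1 g.X i + col2 g.X i))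
      (betaC g.M q.1 • ((ContinuousLinearMap.proj i).comp
          (ContinuousLinearMap.snd ℂ ℂ (Fin N → ℂ))
        + (col1 g.X i) • ContinuousLinearMap.fst ℂ ℂ (Fin N → ℂ))
      + (q.2 i + q.1 * col1 g.X i + col2 g.X i) •
          ((-((g.M 1 0 : ℝ) : ℂ) * betaC g.M q.1 ^ 2) •
            ContinuousLinearMap.fst ℂ ℂ (Fin N → ℂ))) q := by
    intro i
    have hw : HasFDerivAt (fun p : ℂ × (Fin N → ℂ) => p.2 i + p.1 * col1 g.X i + col2 g.X i)
        ((ContinuousLinearMap.proj i).comp (ContinuousLinearMap.snd ℂ ℂ (Fin N → ℂ))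
          + (col1 g.X i) • ContinuousLinearMap.fst ℂ ℂ (Fin N → ℂ)) q := by
      have ha : HasFDerivAt (fun p : ℂ × (Fin N → ℂ) => p.2 i)
          ((ContinuousLinearMap.proj i).comp (ContinuousLinearMap.snd ℂ ℂ (Fin N → ℂ))) q :=
        ((ContinuousLinearMap.proj i).comp
          (ContinuousLinearMap.snd ℂ ℂ (Fin N → ℂ))).hasFDerivAt
      have hb : HasFDerivAt (fun p : ℂ × (Fin N → ℂ) => p.1 * col1 g.X i)
          ((col1 g.X i) • ContinuousLinearMap.fst ℂ ℂ (Fin N → ℂ)) q := hfst.mul_const _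
      exact (ha.add hb).add_const _
    exact hβ.mul hw
  have h2' : HasFDerivAt
      (fun p : ℂ × (Fin N → ℂ) => betaC g.M p.1 • (p.2 + p.1 • col1 g.X + col2 g.X))
      (ContinuousLinearMap.pi fun i =>
        (betaC g.M q.1 • ((ContinuousLinearMap.proj i).comp
            (ContinuousLinearMap.snd ℂ ℂ (Fin N → ℂ))
          + (col1 g.X i) • ContinuousLinearMap.fst ℂ ℂ (Fin N → ℂ))
        + (q.2 i + q.1 * col1 g.X i + col2 g.X i) •
            ((-((g.M 1 0 : ℝ) : ℂ) * betaC g.M q.1 ^ 2) •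
              ContinuousLinearMap.fst ℂ ℂ (Fin N → ℂ)))) q := by
    apply hasFDerivAt_pi''
    intro i
    rw [ContinuousLinearMap.proj_pi]
    exact h2 i
  exact h1.prodMk h2'

end

section
variable (g : JTriple N) (q : ℂ × (Fin N → ℂ))

lemma jAct_snd_apply (i : Fin N) :
    (jAct g q).2 i = betaC g.M q.1 * (q.2 i + q.1 * col1 g.X i + col2 g.X i) := rfl

lemma jActD_tau : jActD g q (1, (0 : Fin N → ℂ))
    = (betaC g.M q.1 ^ 2,
       fun i => betaC g.M q.1 * col1 g.X i
         - ((g.M 1 0 : ℝ) : ℂ) * betaC g.M q.1 * (jAct g q).2 i) := by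
  rw [jActD]
  ext
  · simp
  · rename_i i
    simp only [ContinuousLinearMap.prod_apply, ContinuousLinearMap.pi_apply,
      ContinuousLinearMap.add_apply, ContinuousLinearMap.smul_apply,
      ContinuousLinearMap.comp_apply, ContinuousLinearMap.coe_fst',
      ContinuousLinearMap.coe_snd', ContinuousLinearMap.proj_apply, jAct_snd_apply,
      smul_eq_mul]
    simp
    ring

lemma jActD_z (j : Fin N) : jActD g q ((0 : ℂ), Pi.single j 1)
    = ((0 : ℂ), Pi.single j (betaC g.M q.1)) := by
  rw [jActD]
  ext
  · simp
  · rename_i i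
    simp only [ContinuousLinearMap.prod_apply, ContinuousLinearMap.pi_apply,
      ContinuousLinearMap.add_apply, ContinuousLinearMap.smul_apply,
      ContinuousLinearMap.comp_apply, ContinuousLinearMap.coe_fst',
      ContinuousLinearMap.coe_snd', ContinuousLinearMap.proj_apply, smul_eq_mul]
    simp [Pi.single_apply, mul_ite]

end

section
variable (L : Matrix (Fin N) (Fin N) ℂ) (g : JTriple N) (q : ℂ × (Fin N → ℂ))

lemma diffAt_H (hdet : g.M.det = 1) (k : ℤ)
    (hq : ((g.M 1 0 : ℝ) : ℂ) * q.1 + ((g.M 1 1 : ℝ) : ℂ) ≠ 0) :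
    DifferentiableAt ℂ (fun p => betaC g.M p.1 ^ k * alphaL L g p) q := by
  have hβd : DifferentiableAt ℂ (fun p : ℂ × (Fin N → ℂ) => betaC g.M p.1) q :=
    ((hasDerivAt_betaC g.M q.1 hq).comp_hasFDerivAt q hasFDerivAt_fst).differentiableAt
  have hβne : betaC g.M q.1 ≠ 0 := inv_ne_zero hq
  have h1 : DifferentiableAt ℂ (fun p : ℂ × (Fin N → ℂ) => p.1) q :=
    differentiableAt_fst
  have h2 : ∀ i : Fin N, DifferentiableAt ℂ (fun p : ℂ × (Fin N → ℂ) => p.2 i) q :=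
    fun i => (differentiableAt_pi.mp differentiableAt_snd) i
  have haentry : ∀ i j : Fin N, DifferentiableAt ℂ (fun p => aFun g p i j) q := by
    intro i j
    simp only [aFun, Matrix.sub_apply, Matrix.add_apply, Matrix.smul_apply,
      Matrix.map_apply, vecMulVec_apply, Pi.add_apply, Pi.smul_apply, smul_eq_mul]
    apply DifferentiableAt.sub
    · apply DifferentiableAt.add
      · apply DifferentiableAt.add
        · apply DifferentiableAt.add
          · apply DifferentiableAt.add
            · exact differentiableAt_const _
            · exact differentiableAt_const _
          · exact (differentiableAt_const _).mul (h2 j)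
        · exact (h2 i).mul (differentiableAt_const _)
      · exact h1.mul (differentiableAt_const _)
    · exact ((differentiableAt_const _).mul hβd).mul
        (((h2 i).add (h1.mul (differentiableAt_const _))).add (differentiableAt_const _) |>.mul
          (((h2 j).add (h1.mul (differentiableAt_const _))).add (differentiableAt_const _)))
  have htr : DifferentiableAt ℂ (fun p => (L * aFun g p).trace) q := by
    have : (fun p => (L * aFun g p).trace)
        = fun p => ∑ i : Fin N, ∑ j : Fin N, L i j * aFun g p j i := by
      funext p
      simp [Matrix.trace, Matrix.diag, Matrix.mul_apply]
    rw [this]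
    apply DifferentiableAt.fun_sum
    intro i _
    apply DifferentiableAt.fun_sum
    intro j _
    exact (differentiableAt_const _).mul (haentry j i)
  exact (hβd.zpow (Or.inl hβne)).mul
    (((differentiableAt_const _).mul htr).cexp)
end

section
variable (g : JTriple N)

lemma him (z : ℂ) : (z.im : ℂ) = (z - (starRingEnd ℂ) z) / (2 * Complex.I) := by
  rw [eq_div_iff (by simp [Complex.I_ne_zero] : (2 * Complex.I : ℂ) ≠ 0), Complex.sub_conj]
  push_cast
  ring

lemma div_im_aux3 (a b c d τ σ : ℂ) (hd : a*d - b*c = 1) (hs : c*τ+d ≠ 0) (hsc : c*σ+d ≠ 0) :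
    (a*τ+b)/(c*τ+d) - (a*σ+b)/(c*σ+d) = (τ - σ) * ((c*τ+d)⁻¹ * (c*σ+d)⁻¹) := by
  have key : (a*τ+b)*(c*σ+d) - (c*τ+d)*(a*σ+b) = τ - σ := by linear_combination (τ - σ) * hd
  rw [div_sub_div _ _ hs hsc, key, div_eq_mul_inv, mul_inv]

lemma im_mAct (hdet : g.M.det = 1) (τ : ℂ)
    (hq : ((g.M 1 0 : ℝ) : ℂ) * τ + ((g.M 1 1 : ℝ) : ℂ) ≠ 0) :
    ((mAct g.M τ).im : ℂ)
      = (τ.im : ℂ) * betaC g.M τ * (starRingEnd ℂ) (betaC g.M τ) := by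
  have hd : ((g.M 0 0 : ℝ) : ℂ) * ((g.M 1 1 : ℝ) : ℂ)
      - ((g.M 0 1 : ℝ) : ℂ) * ((g.M 1 0 : ℝ) : ℂ) = 1 := by
    rw [Matrix.det_fin_two] at hdet
    have h := congrArg (fun r : ℝ => (r : ℂ)) hdet
    push_cast at h
    linear_combination h
  have hqc : ((g.M 1 0 : ℝ) : ℂ) * (starRingEnd ℂ) τ + ((g.M 1 1 : ℝ) : ℂ) ≠ 0 := by
    intro h
    apply hq
    have h2 := congrArg (starRingEnd ℂ) h
    simpa [map_add, _root_.map_mul, Complex.conj_ofReal] using h2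
  have hcm : (starRingEnd ℂ) (mAct g.M τ)
      = (((g.M 0 0 : ℝ) : ℂ) * (starRingEnd ℂ) τ + ((g.M 0 1 : ℝ) : ℂ))
        / (((g.M 1 0 : ℝ) : ℂ) * (starRingEnd ℂ) τ + ((g.M 1 1 : ℝ) : ℂ)) := by
    rw [mAct, map_div₀]
    simp [map_add, _root_.map_mul, Complex.conj_ofReal]
  have hcb : (starRingEnd ℂ) (betaC g.M τ)
      = (((g.M 1 0 : ℝ) : ℂ) * (starRingEnd ℂ) τ + ((g.M 1 1 : ℝ) : ℂ))⁻¹ := by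
    rw [betaC, map_inv₀]
    simp [map_add, _root_.map_mul, Complex.conj_ofReal]
  rw [him, him, hcm, hcb, betaC, mAct]
  rw [div_im_aux3 _ _ _ _ _ _ hd hq hqc]
  ring

lemma im_jActz (τ w : ℂ)
    (hq : ((g.M 1 0 : ℝ) : ℂ) * τ + ((g.M 1 1 : ℝ) : ℂ) ≠ 0) :
    betaC g.M τ * (-((g.M 1 0 : ℝ) : ℂ) * (τ.im : ℂ) * (starRingEnd ℂ) (betaC g.M τ * w)
        + (w.im : ℂ))
      = ((betaC g.M τ * w).im : ℂ) := by
  have hqc : ((g.M 1 0 : ℝ) : ℂ) * (starRingEnd ℂ) τ + ((g.M 1 1 : ℝ) : ℂ) ≠ 0 := by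
    intro h
    apply hq
    have h2 := congrArg (starRingEnd ℂ) h
    simpa [map_add, _root_.map_mul, Complex.conj_ofReal] using h2
  have hcb : (starRingEnd ℂ) (betaC g.M τ)
      = (((g.M 1 0 : ℝ) : ℂ) * (starRingEnd ℂ) τ + ((g.M 1 1 : ℝ) : ℂ))⁻¹ := by
    rw [betaC, map_inv₀]
    simp [map_add, _root_.map_mul, Complex.conj_ofReal]
  rw [him w, him (betaC g.M τ * w), him τ, _root_.map_mul, hcb, betaC]
  have hI : (2 * Complex.I : ℂ) ≠ 0 := by simp [Complex.I_ne_zero]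
  field_simp
  ring

lemma im_w_aux (z τ : ℂ) (r1 r2 : ℝ) :
    (((z + τ * (r1 : ℂ) + (r2 : ℂ)).im : ℝ) : ℂ) = (z.im : ℂ) + (τ.im : ℂ) * (r1 : ℂ) := by
  simp only [Complex.add_im, Complex.mul_im, Complex.ofReal_im, Complex.ofReal_re,
    Complex.ofReal_add, mul_zero, add_zero, zero_mul]
  push_cast
  ring

end

end Aux


section Slash
variable {N : ℕ} (k : ℤ) (L : Matrix (Fin N) (Fin N) ℂ) (g : JTriple N)

lemma dTauBar_eq_Dbar (f : ℂ × (Fin N → ℂ) → ℂ) (p : ℂ × (Fin N → ℂ)) :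
    dTauBar f p = Dbar f p (1, 0) := by
  rw [dTauBar, Dbar]
  have h : Complex.I • ((1 : ℂ), (0 : Fin N → ℂ)) = (Complex.I, (0 : Fin N → ℂ)) := by
    rw [Prod.smul_mk, smul_eq_mul, mul_one, smul_zero]
  rw [h]

lemma dZBar_eq_Dbar (f : ℂ × (Fin N → ℂ) → ℂ) (p : ℂ × (Fin N → ℂ)) (j : Fin N) :
    dZBar j f p = Dbar f p (0, Pi.single j 1) := by
  rw [dZBar, Dbar]
  have h : Complex.I • ((0 : ℂ), (Pi.single j 1 : Fin N → ℂ))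
      = ((0 : ℂ), (Pi.single j Complex.I : Fin N → ℂ)) := by
    rw [Prod.smul_mk, smul_zero, ← Pi.single_smul, smul_eq_mul, mul_one]
  rw [h]

lemma Dbar_single (f : ℂ × (Fin N → ℂ) → ℂ) (p : ℂ × (Fin N → ℂ)) (j : Fin N) (c : ℂ) :
    Dbar f p ((0 : ℂ), Pi.single j c) = (starRingEnd ℂ) c * Dbar f p (0, Pi.single j 1) := by
  have h : ((0 : ℂ), (Pi.single j c : Fin N → ℂ)) = c • ((0 : ℂ), (Pi.single j 1 : Fin N → ℂ)) := by
    rw [Prod.smul_mk, smul_zero, ← Pi.single_smul, smul_eq_mul, mul_one]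
  rw [h, Dbar_smul_arg]

lemma Dbar_fst_comp (G1 : ℂ → ℂ) (p : ℂ × (Fin N → ℂ)) (b : Fin N → ℂ)
    (hG1 : DifferentiableAt ℝ G1 p.1) :
    Dbar (fun q : ℂ × (Fin N → ℂ) => G1 q.1) p ((0 : ℂ), b) = 0 := by
  have hcomp : fderiv ℝ (fun q : ℂ × (Fin N → ℂ) => G1 q.1) p
      = (fderiv ℝ G1 p.1).comp (ContinuousLinearMap.fst ℝ ℂ (Fin N → ℂ)) := by
    exact fderiv_comp p hG1 differentiableAt_fst |>.trans (by rw [fderiv_fst])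
  have hI : Complex.I • (((0 : ℂ), b) : ℂ × (Fin N → ℂ)) = ((0 : ℂ), Complex.I • b) := by
    rw [Prod.smul_mk, smul_zero]
  rw [Dbar, hI, hcomp]
  simp

lemma dZBar_slash (f : ℂ × (Fin N → ℂ) → ℂ) (hgd : g.M.det = 1) (j : Fin N)
    (q : ℂ × (Fin N → ℂ)) (hq : ((g.M 1 0 : ℝ) : ℂ) * q.1 + ((g.M 1 1 : ℝ) : ℂ) ≠ 0)
    (hfd : DifferentiableAt ℝ f (jAct g q)) :
    dZBar j (jSlash k L f g) q = betaC g.M q.1 ^ k * alphaL L g q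
      * (starRingEnd ℂ) (betaC g.M q.1) * dZBar j f (jAct g q) := by
  have hφ := hasFDerivAt_jAct g q hgd hq
  have hH := diffAt_H L g q hgd k hq
  have hcomp : DifferentiableAt ℝ (fun p => f (jAct g p)) q :=
    hfd.comp q (hφ.differentiableAt.restrictScalars ℝ)
  have hfder : fderiv ℝ (jAct g) q ((0 : ℂ), Pi.single j 1)
      = ((0 : ℂ), Pi.single j (betaC g.M q.1)) := by
    rw [(hφ.restrictScalars ℝ).fderiv]
    rw [ContinuousLinearMap.coe_restrictScalars']
    exact jActD_z g q j
  calc dZBar j (jSlash k L f g) q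
      = Dbar (fun p => (betaC g.M p.1 ^ k * alphaL L g p) * f (jAct g p)) q
          (0, Pi.single j 1) := dZBar_eq_Dbar (jSlash k L f g) q j
    _ = Dbar (fun p => betaC g.M p.1 ^ k * alphaL L g p) q (0, Pi.single j 1) * f (jAct g q)
        + (betaC g.M q.1 ^ k * alphaL L g q)
          * Dbar (fun p => f (jAct g p)) q (0, Pi.single j 1) :=
      Dbar_mul _ _ _ _ (hH.restrictScalars ℝ) hcomp
    _ = (betaC g.M q.1 ^ k * alphaL L g q)
          * Dbar (fun p => f (jAct g p)) q (0, Pi.single j 1) := by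
      rw [Dbar_holo _ _ _ hH]; ring
    _ = (betaC g.M q.1 ^ k * alphaL L g q)
          * Dbar f (jAct g q) (fderiv ℝ (jAct g) q (0, Pi.single j 1)) := by
      rw [Dbar_comp' f (jAct g) q _ hφ.differentiableAt hfd]
    _ = (betaC g.M q.1 ^ k * alphaL L g q)
          * Dbar f (jAct g q) ((0 : ℂ), Pi.single j (betaC g.M q.1)) := by rw [hfder]
    _ = betaC g.M q.1 ^ k * alphaL L g q
        * (starRingEnd ℂ) (betaC g.M q.1) * dZBar j f (jAct g q) := by
      rw [Dbar_single, ← dZBar_eq_Dbar]; ring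


lemma dTauBar_slash (f : ℂ × (Fin N → ℂ) → ℂ) (hgd : g.M.det = 1)
    (q : ℂ × (Fin N → ℂ)) (hq : ((g.M 1 0 : ℝ) : ℂ) * q.1 + ((g.M 1 1 : ℝ) : ℂ) ≠ 0)
    (hfd : DifferentiableAt ℝ f (jAct g q)) :
    dTauBar (jSlash k L f g) q = betaC g.M q.1 ^ k * alphaL L g q *
      ((starRingEnd ℂ) (betaC g.M q.1) * (starRingEnd ℂ) (betaC g.M q.1) * dTauBar f (jAct g q)
       + ∑ i, ((starRingEnd ℂ) (betaC g.M q.1) * col1 g.X i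
           - ((g.M 1 0 : ℝ) : ℂ) * (starRingEnd ℂ) (betaC g.M q.1)
             * (starRingEnd ℂ) ((jAct g q).2 i)) * dZBar i f (jAct g q)) := by
  have hφ := hasFDerivAt_jAct g q hgd hq
  have hH := diffAt_H L g q hgd k hq
  have hcomp : DifferentiableAt ℝ (fun p => f (jAct g p)) q :=
    hfd.comp q (hφ.differentiableAt.restrictScalars ℝ)
  have hfder : fderiv ℝ (jAct g) q ((1 : ℂ), (0 : Fin N → ℂ))
      = (betaC g.M q.1 ^ 2, fun i => betaC g.M q.1 * col1 g.X i
          - ((g.M 1 0 : ℝ) : ℂ) * betaC g.M q.1 * (jAct g q).2 i) := by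
    rw [(hφ.restrictScalars ℝ).fderiv]
    rw [ContinuousLinearMap.coe_restrictScalars']
    exact jActD_tau g q
  calc dTauBar (jSlash k L f g) q
      = Dbar (fun p => (betaC g.M p.1 ^ k * alphaL L g p) * f (jAct g p)) q
          (1, 0) := dTauBar_eq_Dbar (jSlash k L f g) q
    _ = Dbar (fun p => betaC g.M p.1 ^ k * alphaL L g p) q (1, 0) * f (jAct g q)
        + (betaC g.M q.1 ^ k * alphaL L g q)
          * Dbar (fun p => f (jAct g p)) q (1, 0) :=
      Dbar_mul _ _ _ _ (hH.restrictScalars ℝ) hcomp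
    _ = (betaC g.M q.1 ^ k * alphaL L g q)
          * Dbar (fun p => f (jAct g p)) q (1, 0) := by
      rw [Dbar_holo _ _ _ hH]; ring
    _ = (betaC g.M q.1 ^ k * alphaL L g q)
          * Dbar f (jAct g q) (fderiv ℝ (jAct g) q (1, 0)) := by
      rw [Dbar_comp' f (jAct g) q _ hφ.differentiableAt hfd]
    _ = (betaC g.M q.1 ^ k * alphaL L g q)
          * Dbar f (jAct g q) (betaC g.M q.1 ^ 2, fun i => betaC g.M q.1 * col1 g.X i
              - ((g.M 1 0 : ℝ) : ℂ) * betaC g.M q.1 * (jAct g q).2 i) := by rw [hfder]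
    _ = (betaC g.M q.1 ^ k * alphaL L g q)
          * ((starRingEnd ℂ) (betaC g.M q.1 ^ 2) * Dbar f (jAct g q) (1, 0)
            + ∑ i, (starRingEnd ℂ) (betaC g.M q.1 * col1 g.X i
                - ((g.M 1 0 : ℝ) : ℂ) * betaC g.M q.1 * (jAct g q).2 i)
              * Dbar f (jAct g q) (0, Pi.single i 1)) := by
      exact congrArg _ (Dbar_pair f (jAct g q) _ _)
    _ = betaC g.M q.1 ^ k * alphaL L g q *
        ((starRingEnd ℂ) (betaC g.M q.1) * (starRingEnd ℂ) (betaC g.M q.1) * dTauBar f (jAct g q)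
         + ∑ i, ((starRingEnd ℂ) (betaC g.M q.1) * col1 g.X i
             - ((g.M 1 0 : ℝ) : ℂ) * (starRingEnd ℂ) (betaC g.M q.1)
               * (starRingEnd ℂ) ((jAct g q).2 i)) * dZBar i f (jAct g q)) := by
      rw [← dTauBar_eq_Dbar, map_pow, sq]
      congr 1
      congr 1
      refine Finset.sum_congr rfl fun i _ => ?_
      rw [← dZBar_eq_Dbar, map_sub, _root_.map_mul, _root_.map_mul, _root_.map_mul]
      rw [show (starRingEnd ℂ) (col1 g.X i) = col1 g.X i from Complex.conj_ofReal _]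
      rw [show (starRingEnd ℂ) (((g.M 1 0 : ℝ)) : ℂ) = ((g.M 1 0 : ℝ) : ℂ) from
        Complex.conj_ofReal _]


lemma diff_dZBar (f : ℂ × (Fin N → ℂ) → ℂ) (hf : ContDiff ℝ (⊤ : ℕ∞) f) (j : Fin N) :
    Differentiable ℝ (dZBar j f) := by
  have hfd : ContDiff ℝ (⊤ : ℕ∞) (fderiv ℝ f) := hf.fderiv_right (by exact_mod_cast le_top)
  have h1 : Differentiable ℝ (fun q => fderiv ℝ f q ((0 : ℂ), Pi.single j (1 : ℂ))) :=
    (hfd.clm_apply contDiff_const).differentiable (by simp)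
  have h2 : Differentiable ℝ (fun q => fderiv ℝ f q ((0 : ℂ), Pi.single j Complex.I)) :=
    (hfd.clm_apply contDiff_const).differentiable (by simp)
  exact ((h1.add (h2.const_mul Complex.I)).const_mul (2⁻¹ : ℂ))

lemma dZBar_congr (f₁ f₂ : ℂ × (Fin N → ℂ) → ℂ) (p : ℂ × (Fin N → ℂ)) (j : Fin N)
    (h : f₁ =ᶠ[nhds p] f₂) : dZBar j f₁ p = dZBar j f₂ p := by
  rw [dZBar, dZBar, h.fderiv_eq]

lemma dZBar_dZBar_slash (f : ℂ × (Fin N → ℂ) → ℂ) (hgd : g.M.det = 1)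
    (hf : ContDiff ℝ (⊤ : ℕ∞) f) (i j : Fin N) (p : ℂ × (Fin N → ℂ))
    (hq : ((g.M 1 0 : ℝ) : ℂ) * p.1 + ((g.M 1 1 : ℝ) : ℂ) ≠ 0) :
    dZBar i (fun q => dZBar j (jSlash k L f g) q) p
      = betaC g.M p.1 ^ k * alphaL L g p * (starRingEnd ℂ) (betaC g.M p.1)
        * ((starRingEnd ℂ) (betaC g.M p.1)
            * dZBar i (fun q => dZBar j f q) (jAct g p)) := by
  have hUopen : IsOpen {q : ℂ × (Fin N → ℂ) |
      ((g.M 1 0 : ℝ) : ℂ) * q.1 + ((g.M 1 1 : ℝ) : ℂ) ≠ 0} := by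
    have hcont : Continuous (fun q : ℂ × (Fin N → ℂ) =>
        ((g.M 1 0 : ℝ) : ℂ) * q.1 + ((g.M 1 1 : ℝ) : ℂ)) :=
      (continuous_const.mul continuous_fst).add continuous_const
    exact isOpen_compl_singleton.preimage hcont
  have hmem : {q : ℂ × (Fin N → ℂ) |
      ((g.M 1 0 : ℝ) : ℂ) * q.1 + ((g.M 1 1 : ℝ) : ℂ) ≠ 0} ∈ nhds p :=
    hUopen.mem_nhds hq
  have hEv : (fun q => dZBar j (jSlash k L f g) q) =ᶠ[nhds p]
      (fun q => (betaC g.M q.1 ^ k * alphaL L g q * (starRingEnd ℂ) (betaC g.M q.1))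
        * dZBar j f (jAct g q)) :=
    Filter.eventuallyEq_of_mem hmem (fun q hq' =>
      dZBar_slash k L g f hgd j q hq' ((hf.differentiable (by simp)) (jAct g q)))
  rw [dZBar_congr _ _ _ _ hEv]
  have hφ := hasFDerivAt_jAct g p hgd hq
  have hH := diffAt_H L g p hgd k hq
  have hβC : DifferentiableAt ℂ (fun q : ℂ × (Fin N → ℂ) => betaC g.M q.1) p :=
    ((hasDerivAt_betaC g.M p.1 hq).comp_hasFDerivAt p hasFDerivAt_fst).differentiableAt
  have hconjβ : DifferentiableAt ℝ
      (fun q : ℂ × (Fin N → ℂ) => (starRingEnd ℂ) (betaC g.M q.1)) p := by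
    exact (Complex.conjCLE.differentiable.differentiableAt).comp p (hβC.restrictScalars ℝ)
  have hGdiff : DifferentiableAt ℝ
      (fun q : ℂ × (Fin N → ℂ) =>
        betaC g.M q.1 ^ k * alphaL L g q * (starRingEnd ℂ) (betaC g.M q.1)) p :=
    (hH.restrictScalars ℝ).mul hconjβ
  have hKdiff : DifferentiableAt ℝ (fun q => dZBar j f (jAct g q)) p :=
    (diff_dZBar f hf j (jAct g p)).comp p (hφ.differentiableAt.restrictScalars ℝ)
  have hfder : fderiv ℝ (jAct g) p ((0 : ℂ), Pi.single i 1)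
      = ((0 : ℂ), Pi.single i (betaC g.M p.1)) := by
    rw [(hφ.restrictScalars ℝ).fderiv, ContinuousLinearMap.coe_restrictScalars']
    exact jActD_z g p i
  have hGzero : Dbar (fun q : ℂ × (Fin N → ℂ) =>
      betaC g.M q.1 ^ k * alphaL L g q * (starRingEnd ℂ) (betaC g.M q.1)) p
        (0, Pi.single i 1) = 0 := by
    have hsplit := Dbar_mul (fun q : ℂ × (Fin N → ℂ) => betaC g.M q.1 ^ k * alphaL L g q)
      (fun q : ℂ × (Fin N → ℂ) => (starRingEnd ℂ) (betaC g.M q.1)) p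
      ((0 : ℂ), Pi.single i 1) (hH.restrictScalars ℝ) hconjβ
    rw [hsplit, Dbar_holo _ _ _ hH]
    have hz2 : Dbar (fun q : ℂ × (Fin N → ℂ) => (starRingEnd ℂ) (betaC g.M q.1)) p
        (0, Pi.single i 1) = 0 := by
      refine Dbar_fst_comp (fun τ => (starRingEnd ℂ) (betaC g.M τ)) p _ ?_
      exact (Complex.conjCLE.differentiable.differentiableAt).comp p.1
        ((hasDerivAt_betaC g.M p.1 hq).differentiableAt.restrictScalars ℝ)
    rw [hz2]
    ring
  calc dZBar i (fun q => (betaC g.M q.1 ^ k * alphaL L g q * (starRingEnd ℂ) (betaC g.M q.1))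
        * dZBar j f (jAct g q)) p
      = Dbar (fun q => (betaC g.M q.1 ^ k * alphaL L g q * (starRingEnd ℂ) (betaC g.M q.1))
          * dZBar j f (jAct g q)) p (0, Pi.single i 1) := dZBar_eq_Dbar _ p i
    _ = Dbar (fun q : ℂ × (Fin N → ℂ) =>
            betaC g.M q.1 ^ k * alphaL L g q * (starRingEnd ℂ) (betaC g.M q.1)) p
          (0, Pi.single i 1) * dZBar j f (jAct g p)
        + (betaC g.M p.1 ^ k * alphaL L g p * (starRingEnd ℂ) (betaC g.M p.1))
          * Dbar (fun q => dZBar j f (jAct g q)) p (0, Pi.single i 1) :=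
      Dbar_mul _ _ _ _ hGdiff hKdiff
    _ = (betaC g.M p.1 ^ k * alphaL L g p * (starRingEnd ℂ) (betaC g.M p.1))
          * Dbar (fun q => dZBar j f (jAct g q)) p (0, Pi.single i 1) := by
      rw [hGzero]; ring
    _ = (betaC g.M p.1 ^ k * alphaL L g p * (starRingEnd ℂ) (betaC g.M p.1))
          * Dbar (dZBar j f) (jAct g p) (fderiv ℝ (jAct g) p (0, Pi.single i 1)) := by
      rw [Dbar_comp' (dZBar j f) (jAct g) p _ hφ.differentiableAt
        ((diff_dZBar f hf j) (jAct g p))]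
    _ = (betaC g.M p.1 ^ k * alphaL L g p * (starRingEnd ℂ) (betaC g.M p.1))
          * Dbar (dZBar j f) (jAct g p) ((0 : ℂ), Pi.single i (betaC g.M p.1)) := by
      rw [hfder]
    _ = betaC g.M p.1 ^ k * alphaL L g p * (starRingEnd ℂ) (betaC g.M p.1)
        * ((starRingEnd ℂ) (betaC g.M p.1)
            * dZBar i (fun q => dZBar j f q) (jAct g p)) := by
      rw [Dbar_single, ← dZBar_eq_Dbar]

end Slash

/-- `D₋^{(L)}` is covariant from the weight-`k` to the weight-`(k−2)` slash action:
`D₋^{(L)}(f|_{k,L}[g]) = (D₋^{(L)}f)|_{k-2,L}[g]`. -/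
theorem opDm_covariant (N : ℕ) (hN : 1 ≤ N) (k : ℤ) (L : Matrix (Fin N) (Fin N) ℂ)
    (hL : L.IsSymm) (hdet : IsUnit L.det) (g : JTriple N) (hg : g.IsMem)
    (f : ℂ × (Fin N → ℂ) → ℂ) (hf : ContDiff ℝ (⊤ : ℕ∞) f)
    (p : ℂ × (Fin N → ℂ)) (hp : 0 < p.1.im) :
    opDm L (jSlash k L f g) p = jSlash (k - 2) L (opDm L f) g p := by
  obtain ⟨hgd, -⟩ := hg
  have hq : ((g.M 1 0 : ℝ) : ℂ) * p.1 + ((g.M 1 1 : ℝ) : ℂ) ≠ 0 := by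
    intro h0
    have him0 := congrArg Complex.im h0
    simp only [Complex.add_im, Complex.mul_im, Complex.ofReal_re, Complex.ofReal_im,
      Complex.zero_im, zero_mul, add_zero] at him0
    have hc0 : g.M 1 0 = 0 := by
      rcases mul_eq_zero.mp him0 with h | h
      · exact h
      · exact absurd h (ne_of_gt hp)
    have hre0 := congrArg Complex.re h0
    simp only [Complex.add_re, Complex.mul_re, Complex.ofReal_re, Complex.ofReal_im,
      Complex.zero_re, zero_mul, sub_zero, hc0, zero_add] at hre0
    rw [Matrix.det_fin_two, hc0, hre0] at hgd
    simp at hgd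
  have hβne : betaC g.M p.1 ≠ 0 := inv_ne_zero hq
  have hcβne : (starRingEnd ℂ) (betaC g.M p.1) ≠ 0 := by
    intro h
    apply hβne
    have h2 := congrArg (starRingEnd ℂ) h
    simpa using h2
  have hfd : ∀ x, DifferentiableAt ℝ f x :=
    fun x => (hf.differentiable (by simp)) x
  have hdT := dTauBar_slash k L g f hgd p hq (hfd _)
  have hsumB : ∑ j, (((p.2 j).im : ℝ) : ℂ) * dZBar j (jSlash k L f g) p
      = betaC g.M p.1 ^ k * alphaL L g p * (starRingEnd ℂ) (betaC g.M p.1)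
        * ∑ j, (((p.2 j).im : ℝ) : ℂ) * dZBar j f (jAct g p) := by
    rw [Finset.mul_sum]
    refine Finset.sum_congr rfl fun j _ => ?_
    rw [dZBar_slash k L g f hgd j p hq (hfd _)]
    ring
  have hsumW : ∑ i, ∑ j, (Lfrak L)⁻¹ i j * dZBar i (fun q => dZBar j (jSlash k L f g) q) p
      = betaC g.M p.1 ^ k * alphaL L g p
        * ((starRingEnd ℂ) (betaC g.M p.1) * (starRingEnd ℂ) (betaC g.M p.1))
        * ∑ i, ∑ j, (Lfrak L)⁻¹ i j * dZBar i (fun q => dZBar j f q) (jAct g p) := by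
    rw [Finset.mul_sum]
    refine Finset.sum_congr rfl fun i _ => ?_
    rw [Finset.mul_sum]
    refine Finset.sum_congr rfl fun j _ => ?_
    rw [dZBar_dZBar_slash k L g f hgd hf i j p hq]
    ring
  have hky : (((jAct g p).1.im : ℝ) : ℂ)
      = ((p.1.im : ℝ) : ℂ) * betaC g.M p.1 * (starRingEnd ℂ) (betaC g.M p.1) :=
    im_mAct g hgd p.1 hq
  have hperj : ∀ j : Fin N, betaC g.M p.1 *
      (-((g.M 1 0 : ℝ) : ℂ) * ((p.1.im : ℝ) : ℂ) * (starRingEnd ℂ) ((jAct g p).2 j)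
        + ((((p.2 j).im : ℝ) : ℂ) + ((p.1.im : ℝ) : ℂ) * col1 g.X j))
      = ((((jAct g p).2 j).im : ℝ) : ℂ) := by
    intro j
    have h1 : betaC g.M p.1 *
        (-((g.M 1 0 : ℝ) : ℂ) * ((p.1.im : ℝ) : ℂ) * (starRingEnd ℂ) ((jAct g p).2 j)
          + (((p.2 j + p.1 * col1 g.X j + col2 g.X j).im : ℝ) : ℂ))
        = ((((jAct g p).2 j).im : ℝ) : ℂ) :=
      im_jActz g p.1 (p.2 j + p.1 * col1 g.X j + col2 g.X j) hq
    have h2 : (((p.2 j + p.1 * col1 g.X j + col2 g.X j).im : ℝ) : ℂ)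
        = (((p.2 j).im : ℝ) : ℂ) + ((p.1.im : ℝ) : ℂ) * col1 g.X j :=
      im_w_aux (p.2 j) p.1 (g.X j 0) (g.X j 1)
    rw [h2] at h1
    exact h1
  have hrel : betaC g.M p.1 * (((p.1.im : ℝ) : ℂ) *
        (∑ i, ((starRingEnd ℂ) (betaC g.M p.1) * col1 g.X i
            - ((g.M 1 0 : ℝ) : ℂ) * (starRingEnd ℂ) (betaC g.M p.1)
              * (starRingEnd ℂ) ((jAct g p).2 i)) * dZBar i f (jAct g p))
      + (starRingEnd ℂ) (betaC g.M p.1)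
          * ∑ j, (((p.2 j).im : ℝ) : ℂ) * dZBar j f (jAct g p))
      = (starRingEnd ℂ) (betaC g.M p.1)
        * ∑ j, ((((jAct g p).2 j).im : ℝ) : ℂ) * dZBar j f (jAct g p) := by
    rw [Finset.mul_sum, Finset.mul_sum, ← Finset.sum_add_distrib, Finset.mul_sum,
      Finset.mul_sum]
    refine Finset.sum_congr rfl fun j _ => ?_
    linear_combination ((starRingEnd ℂ) (betaC g.M p.1) * dZBar j f (jAct g p)) * hperj j
  have hSC : ∑ j, ((((jAct g p).2 j).im : ℝ) : ℂ) * dZBar j f (jAct g p)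
      = ((starRingEnd ℂ) (betaC g.M p.1))⁻¹ * (betaC g.M p.1 * (((p.1.im : ℝ) : ℂ) *
        (∑ i, ((starRingEnd ℂ) (betaC g.M p.1) * col1 g.X i
            - ((g.M 1 0 : ℝ) : ℂ) * (starRingEnd ℂ) (betaC g.M p.1)
              * (starRingEnd ℂ) ((jAct g p).2 i)) * dZBar i f (jAct g p))
      + (starRingEnd ℂ) (betaC g.M p.1)
          * ∑ j, (((p.2 j).im : ℝ) : ℂ) * dZBar j f (jAct g p))) := by
    rw [inv_mul_eq_div, eq_div_iff hcβne]
    linear_combination hrel.symm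
  have hzpα : betaC g.M p.1 ^ (k - 2) * alphaL L g p
      = betaC g.M p.1 ^ k * alphaL L g p * (betaC g.M p.1 * betaC g.M p.1)⁻¹ := by
    have h2 : betaC g.M p.1 ^ (2 : ℤ) = betaC g.M p.1 * betaC g.M p.1 := by
      rw [show (2 : ℤ) = ((2 : ℕ) : ℤ) by norm_num, zpow_natCast, pow_two]
    rw [zpow_sub₀ hβne, h2, div_eq_mul_inv]
    ring
  conv_rhs => rw [jSlash]
  simp only [opDm, opXm, yC, vC]
  rw [hdT, hsumB, hsumW, hky, hSC, hzpα]
  field_simp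
  ring
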